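/- Suppose the family of problems is strictly dissipative at (y_s,u_s): there exist a storage function S with |S| ≤ M on E and a monotone increasing continuous function α: [0,∞) → [0,∞) with α(0)=0, α(ε)>0 for ε>0, such that S(y(0)) + ∫₀^τ (f⁰(y(t),u(t)) - f⁰(y_s,u_s)) dt ≥ S(y(τ)) + ∫₀^τ α(‖(y(t)-y_s, u(t)-u_s)‖) dt for all admissible pairs and τ ≤ T. If (y_s,u_s) is admissible on every [0,T] and (y^T,u^T) is optimal for the problem on [0,T], then for every ε > 0 the Lebesgue measure of Q_{ε,T} := {t ∈ [0,T] : ‖(y^T(t)-y_s, u^T(t)-u_s)‖ > ε} satisfies |Q_{ε,T}| ≤ 2M/α(ε), uniformly in T. -/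

import Mathlib

open MeasureTheory Set

/-- Strict dissipativity implies the measure-turnpike property: the set of times at which
an optimal pair `(y^T,u^T)` leaves an `ε`-neighborhood of `(y_s,u_s)` has Lebesgue
measure at most `2M/α(ε)`, uniformly in the horizon `T`. -/
theorem stmt_5
    {X U : Type*} [NormedAddCommGroup X] [NormedAddCommGroup U]
    (f0 : X → U → ℝ) (E : Set X)
    (Adm : ℝ → Set ((ℝ → X) × (ℝ → U)))  -- admissible pairs on [0,T]
    (hE : ∀ T > 0, ∀ p ∈ Adm T, ∀ t ∈ Icc (0:ℝ) T, p.1 t ∈ E)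
    (ys : X) (us : U)
    (hstat : ∀ T > 0, ((fun _ : ℝ => ys), (fun _ : ℝ => us)) ∈ Adm T)
    (S : X → ℝ) (M : ℝ) (hM : 0 < M)
    (hSbound : ∀ y ∈ E, |S y| ≤ M)
    (α : ℝ → ℝ) (hαmono : MonotoneOn α (Ici 0)) (hαcont : ContinuousOn α (Ici 0))
    (hα0 : α 0 = 0) (hαpos : ∀ ε > 0, 0 < α ε)
    -- strict dissipation inequality along every admissible pair
    (hdiss : ∀ T > 0, ∀ p ∈ Adm T, ∀ τ ∈ Icc (0:ℝ) T,
      S (p.1 0) + ∫ t in (0:ℝ)..τ, (f0 (p.1 t) (p.2 t) - f0 ys us) ≥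
        S (p.1 τ) + ∫ t in (0:ℝ)..τ, α ‖(p.1 t - ys, p.2 t - us)‖)
    (hintg : ∀ T > 0, ∀ p ∈ Adm T,
      IntegrableOn (fun t => α ‖(p.1 t - ys, p.2 t - us)‖) (Icc (0:ℝ) T))
    (hmeas : ∀ T > 0, ∀ p ∈ Adm T,
      Measurable (fun t => ‖(p.1 t - ys, p.2 t - us)‖))
    (JT : ℝ → ℝ)
    (hJT : ∀ T > 0, IsGLB
      {v : ℝ | ∃ p ∈ Adm T, v = (1 / T) * ∫ t in (0:ℝ)..T, f0 (p.1 t) (p.2 t)}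
      (JT T)) :
    ∀ T > 0, ∀ p ∈ Adm T,
      (1 / T) * ∫ t in (0:ℝ)..T, f0 (p.1 t) (p.2 t) = JT T →  -- (y^T,u^T) optimal
      ∀ ε > 0,
        volume {t ∈ Icc (0:ℝ) T | ε < ‖(p.1 t - ys, p.2 t - us)‖} ≤
          ENNReal.ofReal (2 * M / α ε) := by
  intro T hT p hp hopt ε hε
  set f : ℝ → ℝ := fun t => ‖(p.1 t - ys, p.2 t - us)‖ with hf
  set g : ℝ → ℝ := fun t => α (f t) with hg
  have hfnn : ∀ t, 0 ≤ f t := fun t => norm_nonneg _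
  have hgnn : ∀ t, 0 ≤ g t := fun t => by
    have := hαmono (self_mem_Ici) (hfnn t) (hfnn t)
    simpa [hα0] using this
  have hc : 0 < α ε := hαpos ε hε
  -- step 1: JT T ≤ f0 ys us
  have hstatval : (1 / T) * ∫ t in (0:ℝ)..T, f0 ys us = f0 ys us := by
    rw [intervalIntegral.integral_const]
    field_simp
    simp
  have hJle : JT T ≤ f0 ys us := by
    have := (hJT T hT).1 ⟨((fun _ : ℝ => ys), (fun _ : ℝ => us)), hstat T hT, rfl⟩
    rw [hstatval] at this
    exact this
  -- step 2: the cost-difference integral is ≤ 0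
  have hdiff : ∫ t in (0:ℝ)..T, (f0 (p.1 t) (p.2 t) - f0 ys us) ≤ 0 := by
    by_cases h : IntervalIntegrable (fun t => f0 (p.1 t) (p.2 t) - f0 ys us) volume 0 T
    · have hfp : IntervalIntegrable (fun t => f0 (p.1 t) (p.2 t)) volume 0 T := by
        have := h.add (intervalIntegrable_const (c := f0 ys us))
        simpa using this
      have : ∫ t in (0:ℝ)..T, (f0 (p.1 t) (p.2 t) - f0 ys us) =
          (∫ t in (0:ℝ)..T, f0 (p.1 t) (p.2 t)) - T * f0 ys us := by
        rw [intervalIntegral.integral_sub hfp (intervalIntegrable_const),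
          intervalIntegral.integral_const]
        simp
      rw [this]
      have hI : ∫ t in (0:ℝ)..T, f0 (p.1 t) (p.2 t) = T * JT T := by
        have := hopt
        field_simp at this
        linarith [this]
      rw [hI]
      nlinarith [hJle, hT]
    · rw [intervalIntegral.integral_undef h]
  -- step 3: ∫ g over Icc ≤ 2M
  have hS0 : |S (p.1 0)| ≤ M := hSbound _ (hE T hT p hp 0 ⟨le_refl _, hT.le⟩)
  have hST : |S (p.1 T)| ≤ M := hSbound _ (hE T hT p hp T ⟨hT.le, le_refl _⟩)
  have hd := hdiss T hT p hp T ⟨hT.le, le_refl _⟩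
  have hIg : ∫ t in (0:ℝ)..T, g t ≤ 2 * M := by
    have h0 := abs_le.1 hS0
    have h1 := abs_le.1 hST
    change _ ≥ S (p.1 T) + ∫ t in (0:ℝ)..T, g t at hd
    linarith [hd, hdiff]
  have hIcc : ∫ t in Icc (0:ℝ) T, g t ≤ 2 * M := by
    rw [MeasureTheory.integral_Icc_eq_integral_Ioc,
      ← intervalIntegral.integral_of_le hT.le]
    exact hIg
  -- step 4: Chebyshev
  set μr := volume.restrict (Icc (0:ℝ) T) with hμr
  have hgint : Integrable g μr := hintg T hT p hp
  have hcheb := mul_meas_ge_le_integral_of_nonneg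
    (Filter.Eventually.of_forall hgnn : 0 ≤ᵐ[μr] g) hgint (α ε)
  set Q := {t ∈ Icc (0:ℝ) T | ε < f t} with hQ
  have hQmeas : MeasurableSet Q := by
    have : Q = Icc (0:ℝ) T ∩ f ⁻¹' (Ioi ε) := by
      ext t; simp [hQ, and_comm, mem_preimage]
    rw [this]
    exact measurableSet_Icc.inter ((hmeas T hT p hp) measurableSet_Ioi)
  have hQsub : Q ⊆ {t | α ε ≤ g t} := by
    intro t ht
    exact hαmono hε.le (hfnn t) (ht.2.le)
  have hvolQ : volume Q = μr Q := by
    rw [hμr, Measure.restrict_apply hQmeas]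
    congr 1
    exact (inter_eq_left.2 (fun t ht => ht.1)).symm
  have hQfin : μr Q ≠ ⊤ := by
    refine (lt_of_le_of_lt (measure_mono (subset_univ Q)) ?_).ne
    rw [Measure.restrict_apply_univ]
    exact measure_Icc_lt_top
  have hSfin : μr {t | α ε ≤ g t} ≠ ⊤ := by
    refine (lt_of_le_of_lt (measure_mono (subset_univ _)) ?_).ne
    rw [Measure.restrict_apply_univ]
    exact measure_Icc_lt_top
  have hmono : μr Q ≤ μr {t | α ε ≤ g t} := measure_mono hQsub
  have htoReal : (μr Q).toReal ≤ 2 * M / α ε := by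
    have h1 : (μr Q).toReal ≤ (μr {t | α ε ≤ g t}).toReal :=
      ENNReal.toReal_mono hSfin hmono
    have h2 : α ε * (μr {t | α ε ≤ g t}).toReal ≤ 2 * M := le_trans hcheb hIcc
    rw [le_div_iff₀ hc]
    nlinarith
  rw [hvolQ]
  rw [ENNReal.le_ofReal_iff_toReal_le hQfin (by positivity)]
  exact htoReal
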